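/- In the setting of two likelihood-ratio experiments f_h, f_l on [a_h,b_h], [a_l,b_l] (0 ≤ a_h < a_l < b_l < b_h ≤ ∞) satisfying the hazard-rate and reverse-hazard-rate dominance conditions, fix p ∈ (0,1) and μ = 1/2, suppose β†_1 < β†_0, and let β* be the unique solution of the indifference equation. Write A_s = F_{h,s}(1) and B_s = F_{l,s}(1) (the CDFs evaluated at likelihood ratio 1), and define G₁ = (1−A₁)/(p(1−A₁)+(1−p)(1−B₁)) − A₁/(pA₁+(1−p)B₁) and G₀ = A₀/(pA₀+(1−p)B₀) − (1−A₀)/(p(1−A₀)+(1−p)(1−B₀)). Then: β* > 1/2 if G₁ < G₀; β* = 1/2 if G₁ = G₀; and β* < 1/2 if G₁ > G₀. -/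

import Mathlib

open MeasureTheory Set

/-- State-0 CDF of a likelihood-ratio experiment. -/
noncomputable def F0 (f : ℝ → ℝ) (ℓ : ℝ) : ℝ := ∫ u in (0:ℝ)..ℓ, f u

/-- State-1 CDF of a likelihood-ratio experiment. -/
noncomputable def F1 (f : ℝ → ℝ) (ℓ : ℝ) : ℝ := ∫ u in (0:ℝ)..ℓ, u * f u

/-- State-`s` CDF, `s ∈ {0,1}`. -/
noncomputable def Fs (f : ℝ → ℝ) (s : Fin 2) (ℓ : ℝ) : ℝ :=
  if s = 0 then F0 f ℓ else F1 f ℓ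

/-- State-`s` density, `s ∈ {0,1}`: `f` in state 0 and `ℓ·f(ℓ)` in state 1. -/
noncomputable def fs (f : ℝ → ℝ) (s : Fin 2) (ℓ : ℝ) : ℝ :=
  if s = 0 then f ℓ else ℓ * f ℓ

/-- A likelihood-ratio experiment on `[a, b]` with `0 ≤ a < b ≤ ∞`. -/
structure IsLRExperiment (f : ℝ → ℝ) (a : ℝ) (b : EReal) : Prop where
  a_nonneg : 0 ≤ a
  a_lt_b : (a : EReal) < b
  cont : Continuous f
  pos : ∀ ℓ : ℝ, a < ℓ → (ℓ : EReal) < b → 0 < f ℓ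
  zero_outside : ∀ ℓ : ℝ, (ℓ < a ∨ b < (ℓ : EReal)) → f ℓ = 0
  int_one : (∫ ℓ in Ioi (0:ℝ), f ℓ) = 1
  int_mean : (∫ ℓ in Ioi (0:ℝ), ℓ * f ℓ) = 1

/-- The low type's experiment is noisier: reverse-hazard-rate and hazard-rate dominance
in each state on the interior of the low type's support. -/
def Noisier (fh fl : ℝ → ℝ) (a_l b_l : ℝ) : Prop :=
  ∀ s : Fin 2, ∀ ℓ : ℝ, a_l < ℓ → ℓ < b_l →
    fs fl s ℓ / Fs fl s ℓ > fs fh s ℓ / Fs fh s ℓ ∧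
    fs fl s ℓ / (1 - Fs fl s ℓ) > fs fh s ℓ / (1 - Fs fh s ℓ)

/-- Likelihood-ratio cutoff corresponding to belief `β` under prior `μ`. -/
noncomputable def zOf (μ β : ℝ) : ℝ := (1 - μ) * β / (μ * (1 - β))

/-- Distribution of the posterior state belief conditional on state `s`. -/
noncomputable def H (f : ℝ → ℝ) (μ : ℝ) (s : Fin 2) (β : ℝ) : ℝ :=
  Fs f s (zOf μ β)

/-- Posterior belief induced by likelihood ratio `x` under prior `μ`. -/
noncomputable def betaOf (μ x : ℝ) : ℝ := μ * x / (μ * x + 1 - μ)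

/-- `βd` is the crossing belief in state `s`: it lies in `(β̲_l, β̄_l)` and
`H_{h,s} − H_{l,s}` is positive below it, zero at it, and negative above it on the high
type's belief range (expressed via `betaOf μ a_h < β`, `β < 1`, `z(β) < b_h`). -/
def IsCrossingBelief (fh fl : ℝ → ℝ) (a_h a_l b_l : ℝ) (b_h : EReal)
    (μ : ℝ) (s : Fin 2) (βd : ℝ) : Prop :=
  βd ∈ Set.Ioo (betaOf μ a_l) (betaOf μ b_l) ∧
  ∀ β : ℝ, betaOf μ a_h < β → β < 1 → ((zOf μ β : ℝ) : EReal) < b_h →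
    ((β < βd → H fh μ s β - H fl μ s β > 0) ∧
     (β = βd → H fh μ s β - H fl μ s β = 0) ∧
     (βd < β → H fh μ s β - H fl μ s β < 0))

/-- Left side of the indifference equation: the sender's expected reputational gain from
report 1 over report 0, at state belief `β`, when the market conjectures the `β`-cutoff
strategy profile. -/
noncomputable def indiffLHS (fh fl : ℝ → ℝ) (μ p β : ℝ) : ℝ :=
  β * ((1 - H fh μ 1 β) / (p * (1 - H fh μ 1 β) + (1 - p) * (1 - H fl μ 1 β))
      - H fh μ 1 β / (p * H fh μ 1 β + (1 - p) * H fl μ 1 β))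

/-- Right side of the indifference equation. -/
noncomputable def indiffRHS (fh fl : ℝ → ℝ) (μ p β : ℝ) : ℝ :=
  (1 - β) * (H fh μ 0 β / (p * H fh μ 0 β + (1 - p) * H fl μ 0 β)
      - (1 - H fh μ 0 β) / (p * (1 - H fh μ 0 β) + (1 - p) * (1 - H fl μ 0 β)))

/-- Expected reputational gain from report 1 under truthful reporting at belief 1/2:
`G₁ = (1−A₁)/(p(1−A₁)+(1−p)(1−B₁)) − A₁/(pA₁+(1−p)B₁)` with `A₁ = F_{h,1}(1)`,
`B₁ = F_{l,1}(1)`. -/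
noncomputable def Grep1 (fh fl : ℝ → ℝ) (p : ℝ) : ℝ :=
  (1 - F1 fh 1) / (p * (1 - F1 fh 1) + (1 - p) * (1 - F1 fl 1))
    - F1 fh 1 / (p * F1 fh 1 + (1 - p) * F1 fl 1)

/-- Expected reputational gain from report 0 under truthful reporting at belief 1/2:
`G₀ = A₀/(pA₀+(1−p)B₀) − (1−A₀)/(p(1−A₀)+(1−p)(1−B₀))` with `A₀ = F_{h,0}(1)`,
`B₀ = F_{l,0}(1)`. -/
noncomputable def Grep0 (fh fl : ℝ → ℝ) (p : ℝ) : ℝ :=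
  F0 fh 1 / (p * F0 fh 1 + (1 - p) * F0 fl 1)
    - (1 - F0 fh 1) / (p * (1 - F0 fh 1) + (1 - p) * (1 - F0 fl 1))


/-! ### Auxiliary lemmas -/

section Aux

lemma Fs_zero' (f : ℝ → ℝ) (ℓ : ℝ) : Fs f 0 ℓ = F0 f ℓ := rfl
lemma Fs_one' (f : ℝ → ℝ) (ℓ : ℝ) : Fs f 1 ℓ = F1 f ℓ := rfl

lemma lr_nonneg {f a b} (hf : IsLRExperiment f a b) : ∀ x : ℝ, 0 ≤ f x := by
  have hdense : Dense ({a, b.toReal} : Set ℝ)ᶜ :=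
    Set.Countable.dense_compl ℝ (Set.toFinite ({a, b.toReal} : Set ℝ)).countable
  have hsub : ({a, b.toReal} : Set ℝ)ᶜ ⊆ {x | 0 ≤ f x} := by
    intro x hx
    simp only [Set.mem_compl_iff, Set.mem_insert_iff, Set.mem_singleton_iff, not_or] at hx
    rcases lt_trichotomy x a with h | h | h
    · exact le_of_eq (hf.zero_outside x (Or.inl h)).symm
    · exact absurd h hx.1
    · rcases lt_trichotomy (x : EReal) b with h2 | h2 | h2
      · exact (hf.pos x h h2).le
      · exact absurd (by rw [← h2]; simp) hx.2
      · exact le_of_eq (hf.zero_outside x (Or.inr h2)).symm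
  intro x
  have hclosed : IsClosed {x : ℝ | 0 ≤ f x} := isClosed_le continuous_const hf.cont
  exact hclosed.closure_subset_iff.mpr hsub (by rw [hdense.closure_eq]; trivial)

lemma lr_intOn0 {f a b} (hf : IsLRExperiment f a b) : IntegrableOn f (Ioi (0:ℝ)) := by
  by_contra h
  have := MeasureTheory.integral_undef h
  rw [hf.int_one] at this; norm_num at this

lemma lr_intOn1 {f a b} (hf : IsLRExperiment f a b) :
    IntegrableOn (fun x => x * f x) (Ioi (0:ℝ)) := by
  by_contra h
  have := MeasureTheory.integral_undef h
  rw [hf.int_mean] at this; norm_num at this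

lemma cdf_bounds (g : ℝ → ℝ) (a : ℝ) (b : EReal) (hg : Continuous g)
    (hnn : ∀ x, 0 ≤ g x) (hpos : ∀ x : ℝ, a < x → (x : EReal) < b → 0 < g x)
    (hint : IntegrableOn g (Ioi (0:ℝ))) (htot : (∫ x in Ioi (0:ℝ), g x) = 1)
    (ha : 0 ≤ a) (ℓ : ℝ) (h1 : a < ℓ) (h2 : (ℓ : EReal) < b) :
    0 < (∫ x in (0:ℝ)..ℓ, g x) ∧ (∫ x in (0:ℝ)..ℓ, g x) < 1 := by
  have hℓ0 : (0:ℝ) < ℓ := lt_of_le_of_lt ha h1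
  constructor
  · have hsplit := intervalIntegral.integral_add_adjacent_intervals
      (hg.intervalIntegrable 0 a) (hg.intervalIntegrable a ℓ) (μ := volume)
    rw [← hsplit]
    have h0a : 0 ≤ ∫ x in (0:ℝ)..a, g x :=
      intervalIntegral.integral_nonneg ha (fun u _ => hnn u)
    have haℓ : 0 < ∫ x in a..ℓ, g x := by
      apply intervalIntegral.intervalIntegral_pos_of_pos_on (hg.intervalIntegrable a ℓ) _ h1
      intro x hx
      exact hpos x hx.1 (lt_trans (by exact_mod_cast hx.2) h2)
    linarith
  · obtain ⟨c, hc1, hc2⟩ := EReal.lt_iff_exists_real_btwn.mp h2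
    have hc1' : ℓ < c := by exact_mod_cast hc1
    have hIoc : (∫ x in (0:ℝ)..ℓ, g x) = ∫ x in Ioc (0:ℝ) ℓ, g x :=
      intervalIntegral.integral_of_le hℓ0.le
    have hunion : Ioc (0:ℝ) ℓ ∪ Ioi ℓ = Ioi (0:ℝ) := Ioc_union_Ioi_eq_Ioi hℓ0.le
    have hsum : (∫ x in Ioc (0:ℝ) ℓ, g x) + (∫ x in Ioi ℓ, g x) = 1 := by
      rw [← MeasureTheory.setIntegral_union (Ioc_disjoint_Ioi le_rfl) measurableSet_Ioi
        (hint.mono_set (by rw [← hunion]; exact subset_union_left))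
        (hint.mono_set (by rw [← hunion]; exact subset_union_right)), hunion, htot]
    have htail : 0 < ∫ x in Ioi ℓ, g x := by
      have hmono : (∫ x in Ioc ℓ c, g x) ≤ ∫ x in Ioi ℓ, g x :=
        MeasureTheory.setIntegral_mono_set
          (hint.mono_set (fun x hx => lt_trans hℓ0 hx))
          (Filter.Eventually.of_forall (fun x => hnn x))
          (Filter.Eventually.of_forall (fun x (hx : x ∈ Ioc ℓ c) => hx.1))
      have hpos' : 0 < ∫ x in Ioc ℓ c, g x := by
        rw [← intervalIntegral.integral_of_le hc1'.le]
        apply intervalIntegral.intervalIntegral_pos_of_pos_on (hg.intervalIntegrable ℓ c) _ hc1'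
        intro x hx
        exact hpos x (lt_trans h1 hx.1) (lt_trans (by exact_mod_cast hx.2) hc2)
      linarith
    rw [hIoc]; linarith

lemma fs_cont {f : ℝ → ℝ} (hf : Continuous f) (s : Fin 2) : Continuous (fs f s) := by
  fin_cases s
  · exact hf
  · exact continuous_id.mul hf

lemma fs_nonneg {f a b} (hf : IsLRExperiment f a b) (s : Fin 2) (x : ℝ) : 0 ≤ fs f s x := by
  fin_cases s
  · exact lr_nonneg hf x
  · show 0 ≤ x * f x
    rcases le_or_gt 0 x with h | h
    · exact mul_nonneg h (lr_nonneg hf x)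
    · rw [hf.zero_outside x (Or.inl (lt_of_lt_of_le h hf.a_nonneg))]; ring_nf; rfl

lemma fs_pos {f a b} (hf : IsLRExperiment f a b) (s : Fin 2) {x : ℝ}
    (h1 : a < x) (h2 : (x : EReal) < b) : 0 < fs f s x := by
  fin_cases s
  · exact hf.pos x h1 h2
  · exact mul_pos (lt_of_le_of_lt hf.a_nonneg h1) (hf.pos x h1 h2)

lemma Fs_mem {f a b} (hf : IsLRExperiment f a b) (s : Fin 2) {ℓ : ℝ}
    (h1 : a < ℓ) (h2 : (ℓ : EReal) < b) : 0 < Fs f s ℓ ∧ Fs f s ℓ < 1 := by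
  fin_cases s
  · exact cdf_bounds f a b hf.cont (lr_nonneg hf) hf.pos (lr_intOn0 hf) hf.int_one
      hf.a_nonneg ℓ h1 h2
  · exact cdf_bounds (fun x => x * f x) a b (continuous_id.mul hf.cont)
      (fs_nonneg hf 1) (fun x hx1 hx2 => fs_pos hf 1 hx1 hx2)
      (lr_intOn1 hf) hf.int_mean hf.a_nonneg ℓ h1 h2

lemma hasDerivAt_Fs {f : ℝ → ℝ} (hf : Continuous f) (s : Fin 2) (x : ℝ) :
    HasDerivAt (Fs f s) (fs f s x) x := by
  fin_cases s
  · exact intervalIntegral.integral_hasDerivAt_right (hf.intervalIntegrable _ _)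
      (hf.stronglyMeasurableAtFilter _ _) hf.continuousAt
  · exact intervalIntegral.integral_hasDerivAt_right
      ((continuous_id.mul hf).intervalIntegrable _ _)
      ((continuous_id.mul hf).stronglyMeasurableAtFilter _ _)
      (continuous_id.mul hf).continuousAt

lemma lr_straddle {f : ℝ → ℝ} {a : ℝ} {b : ℝ} (hf : IsLRExperiment f a (b : EReal)) :
    a < 1 ∧ 1 < b := by
  have hab : a < b := by exact_mod_cast hf.a_lt_b
  have hnn := lr_nonneg hf
  set c := a + (b - a)/3 with hc
  set d := a + 2*(b - a)/3 with hd
  have hac : a < c := by rw [hc]; linarith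
  have hcd : c < d := by rw [hc, hd]; linarith
  have hdb : d < b := by rw [hd]; linarith
  have hfpos : ∀ x ∈ Ioo c d, 0 < f x := by
    intro x hx
    exact hf.pos x (lt_trans hac hx.1) (by exact_mod_cast lt_trans hx.2 hdb)
  have key : ∀ g : ℝ → ℝ, Continuous g → (∀ x ∈ Ioi (0:ℝ), 0 ≤ g x) →
      (∀ x ∈ Ioo c d, 0 < g x) → IntegrableOn g (Ioi (0:ℝ)) →
      (∫ x in Ioi (0:ℝ), g x) = 0 → False := by
    intro g hgc hg0 hgpos hgint hgtot
    have hc0 : (0:ℝ) < c := lt_of_le_of_lt hf.a_nonneg hac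
    have h1 : 0 < ∫ x in c..d, g x :=
      intervalIntegral.intervalIntegral_pos_of_pos_on (hgc.intervalIntegrable c d) hgpos hcd
    have h2 : (∫ x in Ioc c d, g x) ≤ ∫ x in Ioi (0:ℝ), g x :=
      MeasureTheory.setIntegral_mono_set hgint
        (MeasureTheory.ae_restrict_of_forall_mem measurableSet_Ioi hg0)
        (Filter.Eventually.of_forall (fun x (hx : x ∈ Ioc c d) => lt_trans hc0 hx.1))
    rw [intervalIntegral.integral_of_le hcd.le] at h1
    linarith [hgtot ▸ h2]
  constructor
  · by_contra h
    push_neg at h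
    apply key (fun x => x * f x - f x) ((continuous_id.mul hf.cont).sub hf.cont)
    · intro x _
      rcases lt_or_ge x a with h2 | h2
      · simp [hf.zero_outside x (Or.inl h2)]
      · have he : x * f x - f x = (x - 1) * f x := by ring
        rw [he]
        exact mul_nonneg (by linarith) (hnn x)
    · intro x hx
      have he : x * f x - f x = (x - 1) * f x := by ring
      rw [he]
      exact mul_pos (by have := hx.1; rw [hc] at this; linarith) (hfpos x hx)
    · exact (lr_intOn1 hf).sub (lr_intOn0 hf)
    · rw [MeasureTheory.integral_sub (lr_intOn1 hf) (lr_intOn0 hf), hf.int_mean, hf.int_one]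
      ring
  · by_contra h
    push_neg at h
    apply key (fun x => f x - x * f x) (hf.cont.sub (continuous_id.mul hf.cont))
    · intro x _
      rcases lt_or_ge x a with h2 | h2
      · simp [hf.zero_outside x (Or.inl h2)]
      · rcases le_or_gt x b with h3 | h3
        · have he : f x - x * f x = (1 - x) * f x := by ring
          rw [he]
          exact mul_nonneg (by linarith) (hnn x)
        · simp [hf.zero_outside x (Or.inr (by exact_mod_cast h3))]
    · intro x hx
      have he : f x - x * f x = (1 - x) * f x := by ring
      rw [he]
      exact mul_pos (by have := hx.2; rw [hd] at this; linarith) (hfpos x hx)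
    · exact (lr_intOn0 hf).sub (lr_intOn1 hf)
    · rw [MeasureTheory.integral_sub (lr_intOn0 hf) (lr_intOn1 hf), hf.int_mean, hf.int_one]
      ring

lemma zOf_half (β : ℝ) : zOf (1/2) β = β / (1 - β) := by
  unfold zOf
  rw [show (1 - (1:ℝ)/2) * β = (1/2) * β by ring]
  exact mul_div_mul_left β (1 - β) (by norm_num)

lemma betaOf_half (x : ℝ) : betaOf (1/2) x = x / (x + 1) := by
  unfold betaOf
  rw [show (1:ℝ)/2 * x + 1 - 1/2 = (1/2) * (x + 1) by ring]
  exact mul_div_mul_left x (x + 1) (by norm_num)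

lemma betaOf_lt_one {x : ℝ} (hx : 0 ≤ x) : betaOf (1/2) x < 1 := by
  rw [betaOf_half, div_lt_one (by linarith)]
  linarith

lemma betaOf_nonneg {x : ℝ} (hx : 0 ≤ x) : 0 ≤ betaOf (1/2) x := by
  rw [betaOf_half]
  positivity

lemma betaOf_mono {x y : ℝ} (hx : 0 ≤ x) (hxy : x < y) :
    betaOf (1/2) x < betaOf (1/2) y := by
  rw [betaOf_half, betaOf_half, div_lt_div_iff₀ (by linarith) (by linarith)]
  nlinarith

lemma z_bounds {aL bL β : ℝ} (ha : 0 ≤ aL) (hb : 0 ≤ bL)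
    (h1 : betaOf (1/2) aL < β) (h2 : β < betaOf (1/2) bL) :
    0 < β ∧ β < 1 ∧ aL < zOf (1/2) β ∧ zOf (1/2) β < bL := by
  rw [betaOf_half] at h1 h2
  have hβ0 : 0 < β := lt_of_le_of_lt (by positivity) h1
  have hβ1 : β < 1 := by
    have : bL / (bL + 1) < 1 := by rw [div_lt_one (by linarith)]; linarith
    linarith
  have h1' : aL < β * (aL + 1) := (div_lt_iff₀ (by linarith)).mp h1
  have h2' : β * (bL + 1) < bL := (lt_div_iff₀ (by linarith : (0:ℝ) < bL + 1)).mp h2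
  refine ⟨hβ0, hβ1, ?_, ?_⟩
  · rw [zOf_half, lt_div_iff₀ (by linarith)]
    nlinarith
  · rw [zOf_half, div_lt_iff₀ (by linarith)]
    nlinarith

lemma gdiff_pos {p A B : ℝ} (hp0 : 0 < p) (hp1 : p < 1) (hA0 : 0 < A) (hA1 : A < 1)
    (hB0 : 0 < B) (hB1 : B < 1) (h : A < B) :
    0 < (1 - A) / (p * (1 - A) + (1 - p) * (1 - B)) - A / (p * A + (1 - p) * B) := by
  have hd1 : 0 < p * (1 - A) + (1 - p) * (1 - B) := by nlinarith
  have hd2 : 0 < p * A + (1 - p) * B := by nlinarith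
  rw [sub_pos, div_lt_div_iff₀ hd2 hd1]
  nlinarith

lemma gdiff_neg {p A B : ℝ} (hp0 : 0 < p) (hp1 : p < 1) (hA0 : 0 < A) (hA1 : A < 1)
    (hB0 : 0 < B) (hB1 : B < 1) (h : B < A) :
    (1 - A) / (p * (1 - A) + (1 - p) * (1 - B)) - A / (p * A + (1 - p) * B) < 0 := by
  have hd1 : 0 < p * (1 - A) + (1 - p) * (1 - B) := by nlinarith
  have hd2 : 0 < p * A + (1 - p) * B := by nlinarith
  rw [sub_neg, div_lt_div_iff₀ hd1 hd2]
  nlinarith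

lemma gdiff_zero {p A B : ℝ} (hp0 : 0 < p) (hA0 : 0 < A) (hA1 : A < 1) (h : A = B) :
    (1 - A) / (p * (1 - A) + (1 - p) * (1 - B)) - A / (p * A + (1 - p) * B) = 0 := by
  subst h
  rw [show p * (1 - A) + (1 - p) * (1 - A) = 1 - A by ring,
     show p * A + (1 - p) * A = A by ring,
     div_self (by linarith), div_self (by linarith)]
  ring

lemma gdiff0_pos {p A B : ℝ} (hp0 : 0 < p) (hp1 : p < 1) (hA0 : 0 < A) (hA1 : A < 1)
    (hB0 : 0 < B) (hB1 : B < 1) (h : B < A) :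
    0 < A / (p * A + (1 - p) * B) - (1 - A) / (p * (1 - A) + (1 - p) * (1 - B)) := by
  have h' := gdiff_pos (A := 1 - A) (B := 1 - B) hp0 hp1 (by linarith) (by linarith)
    (by linarith) (by linarith) (by linarith)
  rw [show (1:ℝ) - (1 - A) = A by ring, show (1:ℝ) - (1 - B) = B by ring] at h'
  exact h'

lemma gdiff0_neg {p A B : ℝ} (hp0 : 0 < p) (hp1 : p < 1) (hA0 : 0 < A) (hA1 : A < 1)
    (hB0 : 0 < B) (hB1 : B < 1) (h : A < B) :
    A / (p * A + (1 - p) * B) - (1 - A) / (p * (1 - A) + (1 - p) * (1 - B)) < 0 := by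
  have h' := gdiff_neg (A := 1 - A) (B := 1 - B) hp0 hp1 (by linarith) (by linarith)
    (by linarith) (by linarith) (by linarith)
  rw [show (1:ℝ) - (1 - A) = A by ring, show (1:ℝ) - (1 - B) = B by ring] at h'
  exact h'

lemma gdiff0_zero {p A B : ℝ} (hp0 : 0 < p) (hA0 : 0 < A) (hA1 : A < 1) (h : A = B) :
    A / (p * A + (1 - p) * B) - (1 - A) / (p * (1 - A) + (1 - p) * (1 - B)) = 0 := by
  have h' := gdiff_zero (A := 1 - A) (B := 1 - B) hp0 (by linarith) (by linarith)
    (by rw [h])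
  rw [show (1:ℝ) - (1 - A) = A by ring, show (1:ℝ) - (1 - B) = B by ring] at h'
  linarith

lemma r_plus_neg {p A B dA dB a1 b1 w : ℝ} (hp1 : p < 1)
    (hD : 0 < p * A + (1 - p) * B)
    (hdA : dA = a1 * w) (hdB : dB = b1 * w) (hw : 0 < w) (hd : a1 * B < b1 * A) :
    (dA * (p * A + (1 - p) * B) - A * (p * dA + (1 - p) * dB)) /
      (p * A + (1 - p) * B) ^ 2 < 0 := by
  apply div_neg_of_neg_of_pos _ (pow_pos hD 2)
  have he : dA * (p * A + (1 - p) * B) - A * (p * dA + (1 - p) * dB)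
      = (1 - p) * (w * (a1 * B - b1 * A)) := by rw [hdA, hdB]; ring
  rw [he]
  exact mul_neg_of_pos_of_neg (by linarith) (mul_neg_of_pos_of_neg hw (by linarith))

lemma r_minus_pos {p A B dA dB a1 b1 w : ℝ} (hp1 : p < 1)
    (hD : 0 < p * (1 - A) + (1 - p) * (1 - B))
    (hdA : dA = a1 * w) (hdB : dB = b1 * w) (hw : 0 < w)
    (hd : a1 * (1 - B) < b1 * (1 - A)) :
    0 < ((0 - dA) * (p * (1 - A) + (1 - p) * (1 - B))
        - (1 - A) * (p * (0 - dA) + (1 - p) * (0 - dB))) /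
      (p * (1 - A) + (1 - p) * (1 - B)) ^ 2 := by
  apply div_pos _ (pow_pos hD 2)
  have he : (0 - dA) * (p * (1 - A) + (1 - p) * (1 - B))
      - (1 - A) * (p * (0 - dA) + (1 - p) * (0 - dB))
      = (1 - p) * (w * (b1 * (1 - A) - a1 * (1 - B))) := by rw [hdA, hdB]; ring
  rw [he]
  exact mul_pos (by linarith) (mul_pos hw (by linarith))

end Aux


set_option maxHeartbeats 3000000 in
lemma delta_strictMono (fh fl : ℝ → ℝ) (a_h a_l b_l : ℝ) (b_h : EReal)
    (hh : IsLRExperiment fh a_h b_h) (hl : IsLRExperiment fl a_l (b_l : EReal))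
    (hab : a_h < a_l) (hbb : (b_l : EReal) < b_h)
    (hdom : Noisier fh fl a_l b_l)
    (p : ℝ) (hp : p ∈ Set.Ioo (0:ℝ) 1)
    (βd0 βd1 : ℝ)
    (hc0 : IsCrossingBelief fh fl a_h a_l b_l b_h (1/2) 0 βd0)
    (hc1 : IsCrossingBelief fh fl a_h a_l b_l b_h (1/2) 1 βd1)
    (hlt : βd1 < βd0) :
    StrictMonoOn (fun β => indiffLHS fh fl (1/2) p β - indiffRHS fh fl (1/2) p β)
      (Set.Ioo βd1 βd0) := by
  obtain ⟨hp0, hp1⟩ := hp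
  have halb : a_l < b_l := by exact_mod_cast hl.a_lt_b
  have hbl0 : (0:ℝ) ≤ b_l := le_of_lt (lt_of_le_of_lt hl.a_nonneg halb)
  have key : ∀ x ∈ Set.Ioo βd1 βd0,
      ∃ d : ℝ, 0 < d ∧
        HasDerivAt (fun β => indiffLHS fh fl (1/2) p β - indiffRHS fh fl (1/2) p β) d x := by
    intro x hx
    have hxa : betaOf (1/2) a_l < x := lt_trans hc1.1.1 hx.1
    have hxb : x < betaOf (1/2) b_l := lt_trans hx.2 hc0.1.2
    obtain ⟨hx0, hx1, hzl, hzr⟩ := z_bounds hl.a_nonneg hbl0 hxa hxb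
    set ℓ := zOf (1/2) x with hℓ
    have hahℓ : a_h < ℓ := lt_trans hab hzl
    have hℓbh : (ℓ : EReal) < b_h := lt_trans (by exact_mod_cast hzr) hbb
    have hFh1 := Fs_mem hh 1 hahℓ hℓbh
    have hFl1 := Fs_mem hl 1 hzl (by exact_mod_cast hzr)
    have hFh0 := Fs_mem hh 0 hahℓ hℓbh
    have hFl0 := Fs_mem hl 0 hzl (by exact_mod_cast hzr)
    -- dominance in product form
    have hdom1 := hdom 1 ℓ hzl hzr
    have hdom0 := hdom 0 ℓ hzl hzr
    have hd1 : fs fh 1 ℓ * Fs fl 1 ℓ < fs fl 1 ℓ * Fs fh 1 ℓ :=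
      (div_lt_div_iff₀ hFh1.1 hFl1.1).mp hdom1.1
    have hd1' : fs fh 1 ℓ * (1 - Fs fl 1 ℓ) < fs fl 1 ℓ * (1 - Fs fh 1 ℓ) :=
      (div_lt_div_iff₀ (by linarith [hFh1.2]) (by linarith [hFl1.2])).mp hdom1.2
    have hd0 : fs fh 0 ℓ * Fs fl 0 ℓ < fs fl 0 ℓ * Fs fh 0 ℓ :=
      (div_lt_div_iff₀ hFh0.1 hFl0.1).mp hdom0.1
    have hd0' : fs fh 0 ℓ * (1 - Fs fl 0 ℓ) < fs fl 0 ℓ * (1 - Fs fh 0 ℓ) :=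
      (div_lt_div_iff₀ (by linarith [hFh0.2]) (by linarith [hFl0.2])).mp hdom0.2
    -- crossing signs
    have hcond1 := (hc1.2 x (lt_trans (lt_trans (betaOf_mono hh.a_nonneg hab) hc1.1.1) hx.1)
      hx1 hℓbh).2.2 hx.1
    have hcond0 := ((hc0.2 x (lt_trans (lt_trans (betaOf_mono hh.a_nonneg hab) hc1.1.1) hx.1)
      hx1 hℓbh).1) hx.2
    have hS1 : H fh (1/2) 1 x < H fl (1/2) 1 x := by linarith
    have hS0 : H fl (1/2) 0 x < H fh (1/2) 0 x := by linarith
    -- H values as Fs at ℓ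
    have eA1 : H fh (1/2) 1 x = Fs fh 1 ℓ := rfl
    have eB1 : H fl (1/2) 1 x = Fs fl 1 ℓ := rfl
    have eA0 : H fh (1/2) 0 x = Fs fh 0 ℓ := rfl
    have eB0 : H fl (1/2) 0 x = Fs fl 0 ℓ := rfl
    -- derivative of zOf (1/2)
    set w : ℝ := 1 / (1 - x)^2 with hwdef
    have hx1' : (1:ℝ) - x ≠ 0 := ne_of_gt (by linarith)
    have hw : 0 < w := by rw [hwdef]; exact div_pos one_pos (pow_pos (by linarith) 2)
    have hz : HasDerivAt (zOf (1/2)) w x := by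
      have hfun : zOf (1/2) = fun y : ℝ => (1 - (1:ℝ)/2) * y / ((1/2) * (1 - y)) := rfl
      rw [hfun]
      have h1 : HasDerivAt (fun y : ℝ => (1 - (1:ℝ)/2) * y) ((1 - (1:ℝ)/2) * 1) x :=
        (hasDerivAt_id x).const_mul _
      have h2 : HasDerivAt (fun y : ℝ => (1:ℝ)/2 * (1 - y)) ((1:ℝ)/2 * (0 - 1)) x :=
        ((hasDerivAt_const x (1:ℝ)).sub (hasDerivAt_id x)).const_mul _
      have hden : (1:ℝ)/2 * (1 - x) ≠ 0 := by
        apply mul_ne_zero (by norm_num)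
        intro hcontra; rw [sub_eq_zero] at hcontra; exact absurd hcontra.symm (ne_of_lt hx1)
      have := h1.div h2 hden
      refine this.congr_deriv ?_
      rw [hwdef]
      field_simp [hx1']
      ring
    -- derivatives of the four H functions
    have hA1 : HasDerivAt (fun β => H fh (1/2) 1 β) (fs fh 1 ℓ * w) x :=
      (hasDerivAt_Fs hh.cont 1 ℓ).comp x hz
    have hB1 : HasDerivAt (fun β => H fl (1/2) 1 β) (fs fl 1 ℓ * w) x :=
      (hasDerivAt_Fs hl.cont 1 ℓ).comp x hz
    have hA0 : HasDerivAt (fun β => H fh (1/2) 0 β) (fs fh 0 ℓ * w) x :=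
      (hasDerivAt_Fs hh.cont 0 ℓ).comp x hz
    have hB0 : HasDerivAt (fun β => H fl (1/2) 0 β) (fs fl 0 ℓ * w) x :=
      (hasDerivAt_Fs hl.cont 0 ℓ).comp x hz
    -- denominators
    have hDp1 : 0 < p * H fh (1/2) 1 x + (1 - p) * H fl (1/2) 1 x := by
      rw [eA1, eB1]; nlinarith [hFh1.1, hFl1.1]
    have hDm1 : 0 < p * (1 - H fh (1/2) 1 x) + (1 - p) * (1 - H fl (1/2) 1 x) := by
      rw [eA1, eB1]; nlinarith [hFh1.2, hFl1.2]
    have hDp0 : 0 < p * H fh (1/2) 0 x + (1 - p) * H fl (1/2) 0 x := by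
      rw [eA0, eB0]; nlinarith [hFh0.1, hFl0.1]
    have hDm0 : 0 < p * (1 - H fh (1/2) 0 x) + (1 - p) * (1 - H fl (1/2) 0 x) := by
      rw [eA0, eB0]; nlinarith [hFh0.2, hFl0.2]
    -- quotient derivatives, state 1
    have hR1p := hA1.div ((hA1.const_mul p).add (hB1.const_mul (1 - p))) (ne_of_gt hDp1)
    have hR1m := ((hasDerivAt_const x (1:ℝ)).sub hA1).div
      ((((hasDerivAt_const x (1:ℝ)).sub hA1).const_mul p).add
        (((hasDerivAt_const x (1:ℝ)).sub hB1).const_mul (1 - p))) (ne_of_gt hDm1)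
    have hR0p := hA0.div ((hA0.const_mul p).add (hB0.const_mul (1 - p))) (ne_of_gt hDp0)
    have hR0m := ((hasDerivAt_const x (1:ℝ)).sub hA0).div
      ((((hasDerivAt_const x (1:ℝ)).sub hA0).const_mul p).add
        (((hasDerivAt_const x (1:ℝ)).sub hB0).const_mul (1 - p))) (ne_of_gt hDm0)
    -- assemble LHS and RHS derivatives
    have hL := (hasDerivAt_id x).mul (hR1m.sub hR1p)
    have hR := ((hasDerivAt_const x (1:ℝ)).sub (hasDerivAt_id x)).mul (hR0p.sub hR0m)
    have hΔ : HasDerivAt (fun β => indiffLHS fh fl (1/2) p β - indiffRHS fh fl (1/2) p β)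
        _ x := hL.sub hR
    refine ⟨_, ?_, hΔ⟩
    -- sign of each derivative component
    have sgn1p : (fs fh 1 ℓ * w * (p * H fh (1/2) 1 x + (1 - p) * H fl (1/2) 1 x)
        - H fh (1/2) 1 x * (p * (fs fh 1 ℓ * w) + (1 - p) * (fs fl 1 ℓ * w))) /
        (p * H fh (1/2) 1 x + (1 - p) * H fl (1/2) 1 x) ^ 2 < 0 := by
      rw [eA1, eB1]
      rw [eA1, eB1] at hDp1
      exact r_plus_neg hp1 hDp1 rfl rfl hw hd1
    have sgn1m : 0 < ((0 - fs fh 1 ℓ * w) *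
          (p * (1 - H fh (1/2) 1 x) + (1 - p) * (1 - H fl (1/2) 1 x))
        - (1 - H fh (1/2) 1 x) * (p * (0 - fs fh 1 ℓ * w) + (1 - p) * (0 - fs fl 1 ℓ * w))) /
        (p * (1 - H fh (1/2) 1 x) + (1 - p) * (1 - H fl (1/2) 1 x)) ^ 2 := by
      rw [eA1, eB1]
      rw [eA1, eB1] at hDm1
      exact r_minus_pos hp1 hDm1 rfl rfl hw hd1'
    have sgn0p : (fs fh 0 ℓ * w * (p * H fh (1/2) 0 x + (1 - p) * H fl (1/2) 0 x)
        - H fh (1/2) 0 x * (p * (fs fh 0 ℓ * w) + (1 - p) * (fs fl 0 ℓ * w))) /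
        (p * H fh (1/2) 0 x + (1 - p) * H fl (1/2) 0 x) ^ 2 < 0 := by
      rw [eA0, eB0]
      rw [eA0, eB0] at hDp0
      exact r_plus_neg hp1 hDp0 rfl rfl hw hd0
    have sgn0m : 0 < ((0 - fs fh 0 ℓ * w) *
          (p * (1 - H fh (1/2) 0 x) + (1 - p) * (1 - H fl (1/2) 0 x))
        - (1 - H fh (1/2) 0 x) * (p * (0 - fs fh 0 ℓ * w) + (1 - p) * (0 - fs fl 0 ℓ * w))) /
        (p * (1 - H fh (1/2) 0 x) + (1 - p) * (1 - H fl (1/2) 0 x)) ^ 2 := by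
      rw [eA0, eB0]
      rw [eA0, eB0] at hDm0
      exact r_minus_pos hp1 hDm0 rfl rfl hw hd0'
    -- values of the quotient differences
    have val1 : 0 < (1 - H fh (1/2) 1 x) /
          (p * (1 - H fh (1/2) 1 x) + (1 - p) * (1 - H fl (1/2) 1 x))
        - H fh (1/2) 1 x / (p * H fh (1/2) 1 x + (1 - p) * H fl (1/2) 1 x) := by
      rw [eA1, eB1]
      rw [eA1, eB1] at hS1
      exact gdiff_pos hp0 hp1 hFh1.1 hFh1.2 hFl1.1 hFl1.2 hS1
    have val0 : 0 < H fh (1/2) 0 x / (p * H fh (1/2) 0 x + (1 - p) * H fl (1/2) 0 x)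
        - (1 - H fh (1/2) 0 x) /
          (p * (1 - H fh (1/2) 0 x) + (1 - p) * (1 - H fl (1/2) 0 x)) := by
      rw [eA0, eB0]
      rw [eA0, eB0] at hS0
      exact gdiff0_pos hp0 hp1 hFh0.1 hFh0.2 hFl0.1 hFl0.2 hS0
    -- total positivity
    have t1 : 0 < x * ((((0 - fs fh 1 ℓ * w) *
          (p * (1 - H fh (1/2) 1 x) + (1 - p) * (1 - H fl (1/2) 1 x))
        - (1 - H fh (1/2) 1 x) * (p * (0 - fs fh 1 ℓ * w) + (1 - p) * (0 - fs fl 1 ℓ * w))) /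
        (p * (1 - H fh (1/2) 1 x) + (1 - p) * (1 - H fl (1/2) 1 x)) ^ 2)
        - ((fs fh 1 ℓ * w * (p * H fh (1/2) 1 x + (1 - p) * H fl (1/2) 1 x)
        - H fh (1/2) 1 x * (p * (fs fh 1 ℓ * w) + (1 - p) * (fs fl 1 ℓ * w))) /
        (p * H fh (1/2) 1 x + (1 - p) * H fl (1/2) 1 x) ^ 2)) :=
      mul_pos hx0 (by linarith)
    have t0 : 0 < (1 - x) * ((((0 - fs fh 0 ℓ * w) *
          (p * (1 - H fh (1/2) 0 x) + (1 - p) * (1 - H fl (1/2) 0 x))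
        - (1 - H fh (1/2) 0 x) * (p * (0 - fs fh 0 ℓ * w) + (1 - p) * (0 - fs fl 0 ℓ * w))) /
        (p * (1 - H fh (1/2) 0 x) + (1 - p) * (1 - H fl (1/2) 0 x)) ^ 2)
        - ((fs fh 0 ℓ * w * (p * H fh (1/2) 0 x + (1 - p) * H fl (1/2) 0 x)
        - H fh (1/2) 0 x * (p * (fs fh 0 ℓ * w) + (1 - p) * (fs fl 0 ℓ * w))) /
        (p * H fh (1/2) 0 x + (1 - p) * H fl (1/2) 0 x) ^ 2)) :=
      mul_pos (by linarith) (by linarith)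
    simp only [id_eq, Pi.add_apply, Pi.sub_apply, Pi.mul_apply, Pi.div_apply]
    linarith [t1, t0, val1, val0]
  have hmono : StrictMonoOn (fun β => indiffLHS fh fl (1/2) p β - indiffRHS fh fl (1/2) p β)
      (Set.Ioo βd1 βd0) := by
    apply strictMonoOn_of_deriv_pos (convex_Ioo βd1 βd0)
    · intro x hx
      obtain ⟨d, _, hd⟩ := key x hx
      exact hd.differentiableAt.continuousAt.continuousWithinAt
    · intro x hx
      rw [interior_Ioo] at hx
      obtain ⟨d, hdpos, hd⟩ := key x hx
      rw [hd.deriv]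
      exact hdpos
  exact hmono

/-- At prior `μ = 1/2`, the unique solution `β*` of the indifference equation lies above,
at, or below `1/2` according as `G₁ < G₀`, `G₁ = G₀`, or `G₁ > G₀`. -/
theorem stmt_6 (fh fl : ℝ → ℝ) (a_h a_l b_l : ℝ) (b_h : EReal)
    (hh : IsLRExperiment fh a_h b_h) (hl : IsLRExperiment fl a_l (b_l : EReal))
    (hab : a_h < a_l) (hbb : (b_l : EReal) < b_h)
    (hdom : Noisier fh fl a_l b_l)
    (p : ℝ) (hp : p ∈ Set.Ioo (0:ℝ) 1)
    (βd0 βd1 : ℝ)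
    (hc0 : IsCrossingBelief fh fl a_h a_l b_l b_h (1/2) 0 βd0)
    (hc1 : IsCrossingBelief fh fl a_h a_l b_l b_h (1/2) 1 βd1)
    (hlt : βd1 < βd0)
    (βstar : ℝ) (hβ : βstar ∈ Set.Ioo βd1 βd0)
    (heq : indiffLHS fh fl (1/2) p βstar = indiffRHS fh fl (1/2) p βstar) :
    (Grep1 fh fl p < Grep0 fh fl p → βstar > 1/2) ∧
    (Grep1 fh fl p = Grep0 fh fl p → βstar = 1/2) ∧
    (Grep0 fh fl p < Grep1 fh fl p → βstar < 1/2) := by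
  obtain ⟨hp0, hp1⟩ := hp
  obtain ⟨hal1, hbl1⟩ := lr_straddle hl
  have hah1 : a_h < 1 := lt_trans hab hal1
  have h1bh : ((1:ℝ) : EReal) < b_h := lt_trans (by exact_mod_cast hbl1) hbb
  have hFh1 : 0 < F1 fh 1 ∧ F1 fh 1 < 1 := Fs_mem hh 1 hah1 h1bh
  have hFl1 : 0 < F1 fl 1 ∧ F1 fl 1 < 1 := Fs_mem hl 1 hal1 (by exact_mod_cast hbl1)
  have hFh0 : 0 < F0 fh 1 ∧ F0 fh 1 < 1 := Fs_mem hh 0 hah1 h1bh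
  have hFl0 : 0 < F0 fl 1 ∧ F0 fl 1 < 1 := Fs_mem hl 0 hal1 (by exact_mod_cast hbl1)
  have hz2 : zOf (1/2) (1/2) = (1:ℝ) := by rw [zOf_half]; norm_num
  have hbah : betaOf (1/2) a_h < 1/2 := by
    rw [betaOf_half, div_lt_iff₀ (by linarith [hh.a_nonneg])]
    linarith [hh.a_nonneg]
  have hz2E : ((zOf (1/2) (1/2) : ℝ) : EReal) < b_h := by rw [hz2]; exact h1bh
  have hcross1 := hc1.2 (1/2) hbah (by norm_num) hz2E
  have hcross0 := hc0.2 (1/2) hbah (by norm_num) hz2E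
  have eA1 : H fh (1/2) 1 (1/2) = F1 fh 1 := by
    show Fs fh 1 (zOf (1/2) (1/2)) = F1 fh 1
    rw [hz2, Fs_one' fh 1]
  have eB1 : H fl (1/2) 1 (1/2) = F1 fl 1 := by
    show Fs fl 1 (zOf (1/2) (1/2)) = F1 fl 1
    rw [hz2, Fs_one' fl 1]
  have eA0 : H fh (1/2) 0 (1/2) = F0 fh 1 := by
    show Fs fh 0 (zOf (1/2) (1/2)) = F0 fh 1
    rw [hz2, Fs_zero' fh 1]
  have eB0 : H fl (1/2) 0 (1/2) = F0 fl 1 := by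
    show Fs fl 0 (zOf (1/2) (1/2)) = F0 fl 1
    rw [hz2, Fs_zero' fl 1]
  rcases le_or_gt ((1:ℝ)/2) βd1 with hE1 | hI1
  · -- report 0 may be misleading; here 1/2 ≤ βd1 < βstar
    have hD0 := hcross0.1 (lt_of_le_of_lt hE1 hlt)
    rw [eA0, eB0] at hD0
    have hG0 : 0 < Grep0 fh fl p :=
      gdiff0_pos hp0 hp1 hFh0.1 hFh0.2 hFl0.1 hFl0.2 (by linarith)
    have hG1 : Grep1 fh fl p ≤ 0 := by
      rcases hE1.eq_or_lt with heq2 | hlt2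
      · have h0 := hcross1.2.1 heq2
        rw [eA1, eB1] at h0
        exact le_of_eq (gdiff_zero hp0 hFh1.1 hFh1.2 (by linarith))
      · have h0 := hcross1.1 hlt2
        rw [eA1, eB1] at h0
        exact le_of_lt (gdiff_neg hp0 hp1 hFh1.1 hFh1.2 hFl1.1 hFl1.2 (by linarith))
    exact ⟨fun _ => lt_of_le_of_lt hE1 hβ.1, fun he => by linarith, fun hgt => by linarith⟩
  rcases le_or_gt βd0 ((1:ℝ)/2) with hE2 | hI2
  · -- here βstar < βd0 ≤ 1/2
    have hD1 := hcross1.2.2 (lt_of_lt_of_le hlt hE2)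
    rw [eA1, eB1] at hD1
    have hG1 : 0 < Grep1 fh fl p :=
      gdiff_pos hp0 hp1 hFh1.1 hFh1.2 hFl1.1 hFl1.2 (by linarith)
    have hG0 : Grep0 fh fl p ≤ 0 := by
      rcases hE2.eq_or_lt with heq2 | hlt2
      · have h0 := hcross0.2.1 heq2.symm
        rw [eA0, eB0] at h0
        exact le_of_eq (gdiff0_zero hp0 hFh0.1 hFh0.2 (by linarith))
      · have h0 := hcross0.2.2 hlt2
        rw [eA0, eB0] at h0
        exact le_of_lt (gdiff0_neg hp0 hp1 hFh0.1 hFh0.2 hFl0.1 hFl0.2 (by linarith))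
    exact ⟨fun h => by linarith, fun he => by linarith, fun _ => lt_of_lt_of_le hβ.2 hE2⟩
  · -- interior case: 1/2 ∈ (βd1, βd0); use strict monotonicity of the gap
    have hmono := delta_strictMono fh fl a_h a_l b_l b_h hh hl hab hbb hdom p ⟨hp0, hp1⟩
      βd0 βd1 hc0 hc1 hlt
    have hmem2 : (1/2 : ℝ) ∈ Set.Ioo βd1 βd0 := ⟨hI1, hI2⟩
    have hstar0 : indiffLHS fh fl (1/2) p βstar - indiffRHS fh fl (1/2) p βstar = 0 := by
      rw [heq]; ring
    have hhalf : indiffLHS fh fl (1/2) p (1/2) - indiffRHS fh fl (1/2) p (1/2)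
        = 1/2 * (Grep1 fh fl p - Grep0 fh fl p) := by
      unfold indiffLHS indiffRHS Grep1 Grep0 H
      rw [hz2, Fs_one' fh 1, Fs_one' fl 1, Fs_zero' fh 1, Fs_zero' fl 1]
      ring
    refine ⟨?_, ?_, ?_⟩
    · intro h
      have h2 : indiffLHS fh fl (1/2) p (1/2) - indiffRHS fh fl (1/2) p (1/2)
          < indiffLHS fh fl (1/2) p βstar - indiffRHS fh fl (1/2) p βstar := by
        rw [hstar0, hhalf]; linarith
      exact (hmono.lt_iff_lt hmem2 hβ).mp h2
    · intro h
      have h2 : indiffLHS fh fl (1/2) p (1/2) - indiffRHS fh fl (1/2) p (1/2)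
          = indiffLHS fh fl (1/2) p βstar - indiffRHS fh fl (1/2) p βstar := by
        rw [hstar0, hhalf, h]; ring
      exact (hmono.injOn hmem2 hβ h2).symm
    · intro h
      have h2 : indiffLHS fh fl (1/2) p βstar - indiffRHS fh fl (1/2) p βstar
          < indiffLHS fh fl (1/2) p (1/2) - indiffRHS fh fl (1/2) p (1/2) := by
        rw [hstar0, hhalf]; linarith
      exact (hmono.lt_iff_lt hβ hmem2).mp h2
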